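/- arXiv:1705.07382 — 3 statements merged into one kernel-verified Lean document; each statement's English description precedes it below -/
import Mathlib

section
/- Let Σ and G be real symmetric positive definite m×m matrices, and suppose ‖G⁻¹ Σ⁻¹‖ ≤ 1, where ‖·‖ denotes the operator norm with respect to the Euclidean norm. Then Λ_min(G^{−1/2} Σ⁻¹ G^{−1/2}) ≤ 1. Moreover, for the choice G* := Σ⁻¹ one has ‖(G*)⁻¹ Σ⁻¹‖ = 1 and Λ_min((G*)^{−1/2} Σ⁻¹ (G*)^{−1/2}) = 1; hence G* = Σ⁻¹ maximizes Λ_min(G^{−1/2} Σ⁻¹ G^{−1/2}) over all symmetric positive definite G with ‖G⁻¹ Σ⁻¹‖ ≤ 1. -/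
open Matrix
open scoped Classical

/-- The smallest eigenvalue of a real symmetric matrix (junk value `0` otherwise). -/
noncomputable def lambdaMin {m : ℕ} (M : Matrix (Fin m) (Fin m) ℝ) : ℝ :=
  if h : M.IsHermitian then ⨅ i, h.eigenvalues i else 0

/-- The inverse of the (unique symmetric positive semidefinite) square root of a matrix
(junk value `0` if the matrix is not positive semidefinite). -/
noncomputable def invSqrt {m : ℕ} (M : Matrix (Fin m) (Fin m) ℝ) :
    Matrix (Fin m) (Fin m) ℝ :=
  if h : M.PosSemidef then
    ((h.1.eigenvectorUnitary : Matrix (Fin m) (Fin m) ℝ) *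
      diagonal ((↑) ∘ Real.sqrt ∘ h.1.eigenvalues) *
      (star h.1.eigenvectorUnitary : Matrix (Fin m) (Fin m) ℝ))⁻¹ else 0
/-- The operator norm of a matrix with respect to the Euclidean norm on `ℝ^m`. -/
noncomputable def euclideanOpNorm {m : ℕ} (M : Matrix (Fin m) (Fin m) ℝ) : ℝ :=
  ‖LinearMap.toContinuousLinearMap (Matrix.toEuclideanLin M)‖

section aux

noncomputable def psdSqrt {m : ℕ} {M : Matrix (Fin m) (Fin m) ℝ} (h : M.PosSemidef) :
    Matrix (Fin m) (Fin m) ℝ :=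
  (h.1.eigenvectorUnitary : Matrix (Fin m) (Fin m) ℝ) *
      diagonal ((↑) ∘ Real.sqrt ∘ h.1.eigenvalues) *
      (star h.1.eigenvectorUnitary : Matrix (Fin m) (Fin m) ℝ)
lemma psdSqrt_mul_self {m : ℕ} {M : Matrix (Fin m) (Fin m) ℝ} (h : M.PosSemidef) :
    psdSqrt h * psdSqrt h = M := by
  have hU : (star h.1.eigenvectorUnitary : Matrix (Fin m) (Fin m) ℝ) *
      (h.1.eigenvectorUnitary : Matrix (Fin m) (Fin m) ℝ) = 1 := by simp
  have hd : diagonal ((↑) ∘ Real.sqrt ∘ h.1.eigenvalues) *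
      diagonal ((↑) ∘ Real.sqrt ∘ h.1.eigenvalues) =
      diagonal ((RCLike.ofReal : ℝ → ℝ) ∘ h.1.eigenvalues) := by
    rw [diagonal_mul_diagonal]
    congr 1; funext i
    simp [Real.mul_self_sqrt (h.eigenvalues_nonneg i)]
  conv_rhs => rw [h.1.spectral_theorem, Unitary.conjStarAlgAut_apply]
  unfold psdSqrt
  calc _ = (h.1.eigenvectorUnitary : Matrix (Fin m) (Fin m) ℝ) *
        (diagonal ((↑) ∘ Real.sqrt ∘ h.1.eigenvalues) *
        ((star h.1.eigenvectorUnitary : Matrix (Fin m) (Fin m) ℝ) *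
          (h.1.eigenvectorUnitary : Matrix (Fin m) (Fin m) ℝ)) *
        diagonal ((↑) ∘ Real.sqrt ∘ h.1.eigenvalues)) *
        (star h.1.eigenvectorUnitary : Matrix (Fin m) (Fin m) ℝ) := by
          simp only [Matrix.mul_assoc]
    _ = _ := by rw [hU, Matrix.mul_one, hd]
lemma psdSqrt_isHermitian {m : ℕ} {M : Matrix (Fin m) (Fin m) ℝ} (h : M.PosSemidef) :
    (psdSqrt h).IsHermitian := by
  unfold psdSqrt Matrix.IsHermitian
  rw [conjTranspose_mul, conjTranspose_mul, Matrix.mul_assoc]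
  simp [Matrix.star_eq_conjTranspose]


variable {m : ℕ}

lemma euclideanOpNorm_one (hm : 0 < m) :
    euclideanOpNorm (1 : Matrix (Fin m) (Fin m) ℝ) = 1 := by
  haveI : Nonempty (Fin m) := ⟨⟨0, hm⟩⟩
  have h : LinearMap.toContinuousLinearMap (Matrix.toEuclideanLin (1 : Matrix (Fin m) (Fin m) ℝ))
      = ContinuousLinearMap.id ℝ (EuclideanSpace ℝ (Fin m)) := by
    ext x
    simp [Matrix.toEuclideanLin_apply]
  rw [euclideanOpNorm, h, ContinuousLinearMap.norm_id]

lemma lambdaMin_one (hm : 0 < m) :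
    lambdaMin (1 : Matrix (Fin m) (Fin m) ℝ) = 1 := by
  haveI : Nonempty (Fin m) := ⟨⟨0, hm⟩⟩
  have h1 : (1 : Matrix (Fin m) (Fin m) ℝ).IsHermitian := Matrix.isHermitian_one
  rw [lambdaMin, dif_pos h1]
  have heig : ∀ i, h1.eigenvalues i = 1 := by
    intro i
    have hv := h1.mulVec_eigenvectorBasis i
    rw [Matrix.one_mulVec] at hv
    have hvne : (⇑(h1.eigenvectorBasis i) : Fin m → ℝ) ≠ 0 := by
      have := h1.eigenvectorBasis.orthonormal.ne_zero i
      simpa [EuclideanSpace, PiLp, WithLp] using this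
    have : (h1.eigenvalues i - 1) • (⇑(h1.eigenvectorBasis i) : Fin m → ℝ) = 0 := by
      rw [sub_smul, one_smul, ← hv, sub_self]
    rcases smul_eq_zero.mp this with h | h
    · linarith [sub_eq_zero.mp h]
    · exact absurd h hvne
  simp only [heig]
  exact ciInf_const

lemma posSemidef_sqrt_det_isUnit {M : Matrix (Fin m) (Fin m) ℝ} (hM : M.PosDef) :
    IsUnit (psdSqrt hM.posSemidef).det := by
  have h : (psdSqrt hM.posSemidef).det * (psdSqrt hM.posSemidef).det = M.det := by
    rw [← Matrix.det_mul, psdSqrt_mul_self hM.posSemidef]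
  refine isUnit_iff_ne_zero.mpr fun h0 => ?_
  rw [h0, zero_mul] at h
  exact hM.det_pos.ne' h.symm

lemma lambdaMin_le_one {S G : Matrix (Fin m) (Fin m) ℝ} (hm : 0 < m)
    (hS : S.PosDef) (hG : G.PosDef)
    (hconstraint : euclideanOpNorm (G⁻¹ * S⁻¹) ≤ 1) :
    lambdaMin (invSqrt G * S⁻¹ * invSqrt G) ≤ 1 := by
  haveI : Nonempty (Fin m) := ⟨⟨0, hm⟩⟩
  have hGps := hG.posSemidef
  set B := psdSqrt hGps with hBdef
  have hBB : B * B = G := psdSqrt_mul_self hGps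
  have hdetB : IsUnit B.det := posSemidef_sqrt_det_isUnit hG
  have hiG : invSqrt G = B⁻¹ := by rw [invSqrt, dif_pos hGps]; rfl
  have hBh : (B⁻¹).IsHermitian := (psdSqrt_isHermitian hGps).inv
  have hAh : (B⁻¹ * S⁻¹ * B⁻¹).IsHermitian := by
    have hSh : (S⁻¹).IsHermitian := hS.inv.isHermitian
    unfold Matrix.IsHermitian
    rw [Matrix.conjTranspose_mul, Matrix.conjTranspose_mul, hBh.eq, hSh.eq,
      Matrix.mul_assoc]
  rw [hiG, lambdaMin, dif_pos hAh]
  have hGinv : G⁻¹ = B⁻¹ * B⁻¹ := by rw [← hBB, Matrix.mul_inv_rev]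
  have key : ∀ i, hAh.eigenvalues i ≤ 1 := by
    intro i
    set lam := hAh.eigenvalues i with hlam
    have hv := hAh.mulVec_eigenvectorBasis i
    set v : Fin m → ℝ := ⇑(hAh.eigenvectorBasis i) with hvdef
    have hvne : v ≠ 0 := by
      have := hAh.eigenvectorBasis.orthonormal.ne_zero i
      simpa [hvdef, EuclideanSpace, PiLp, WithLp] using this
    set w : Fin m → ℝ := B⁻¹ *ᵥ v with hwdef
    have hwne : w ≠ 0 := by
      intro h0
      apply hvne
      have : B *ᵥ w = v := by
        rw [hwdef, Matrix.mulVec_mulVec, Matrix.mul_nonsing_inv _ hdetB, Matrix.one_mulVec]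
      rw [h0, Matrix.mulVec_zero] at this
      exact this.symm
    have hkey : (G⁻¹ * S⁻¹) *ᵥ w = lam • w := by
      rw [hwdef, Matrix.mulVec_mulVec, hGinv]
      have : B⁻¹ * B⁻¹ * S⁻¹ * B⁻¹ = B⁻¹ * (B⁻¹ * S⁻¹ * B⁻¹) := by
        simp only [Matrix.mul_assoc]
      rw [this, ← Matrix.mulVec_mulVec, hv, Matrix.mulVec_smul]
    -- move to EuclideanSpace
    set u : EuclideanSpace ℝ (Fin m) := (WithLp.equiv 2 (Fin m → ℝ)).symm w with hudef
    have hune : u ≠ 0 := by simpa [hudef] using hwne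
    have happ : Matrix.toEuclideanLin (G⁻¹ * S⁻¹) u = lam • u := by
      rw [Matrix.toEuclideanLin_apply, hudef]
      simp only [WithLp.equiv_symm_apply, WithLp.ofLp_toLp]
      rw [hkey]
      simp
    have hle : ‖Matrix.toEuclideanLin (G⁻¹ * S⁻¹) u‖ ≤ euclideanOpNorm (G⁻¹ * S⁻¹) * ‖u‖ := by
      have := (LinearMap.toContinuousLinearMap (Matrix.toEuclideanLin (G⁻¹ * S⁻¹))).le_opNorm u
      rwa [LinearMap.coe_toContinuousLinearMap'] at this
    rw [happ, norm_smul, Real.norm_eq_abs] at hle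
    have hupos : 0 < ‖u‖ := norm_pos_iff.mpr hune
    have habs : |lam| ≤ 1 := by
      have h1 : euclideanOpNorm (G⁻¹ * S⁻¹) * ‖u‖ ≤ 1 * ‖u‖ :=
        mul_le_mul_of_nonneg_right hconstraint hupos.le
      exact le_of_mul_le_mul_right (hle.trans h1) hupos
    exact (le_abs_self lam).trans habs
  exact le_trans (ciInf_le (Set.finite_range _).bddBelow ⟨0, hm⟩) (key ⟨0, hm⟩)

end aux

/-- For positive definite `Σ` and `G` with `‖G⁻¹Σ⁻¹‖ ≤ 1`, one has
`Λ_min(G^{−1/2} Σ⁻¹ G^{−1/2}) ≤ 1`; moreover `G* = Σ⁻¹` satisfies the constraint with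
equality and attains the value `1`, hence is optimal. -/
theorem fisher_metric_optimal {m : ℕ} (hm : 0 < m)
    (S G : Matrix (Fin m) (Fin m) ℝ) (hS : S.PosDef) (hG : G.PosDef)
    (hconstraint : euclideanOpNorm (G⁻¹ * S⁻¹) ≤ 1) :
    lambdaMin (invSqrt G * S⁻¹ * invSqrt G) ≤ 1 ∧
      euclideanOpNorm ((S⁻¹)⁻¹ * S⁻¹) = 1 ∧
      lambdaMin (invSqrt (S⁻¹) * S⁻¹ * invSqrt (S⁻¹)) = 1 := by
  have hdetS : IsUnit S.det := isUnit_iff_ne_zero.mpr hS.det_pos.ne'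
  refine ⟨lambdaMin_le_one hm hS hG hconstraint, ?_, ?_⟩
  · rw [Matrix.nonsing_inv_nonsing_inv S hdetS, Matrix.mul_nonsing_inv S hdetS]
    exact euclideanOpNorm_one hm
  · have hSi : (S⁻¹).PosDef := hS.inv
    have hps := hSi.posSemidef
    have hdetC : IsUnit (psdSqrt hps).det := posSemidef_sqrt_det_isUnit hSi
    have hiS : invSqrt (S⁻¹) = (psdSqrt hps)⁻¹ := by rw [invSqrt, dif_pos hps]; rfl
    set C := psdSqrt hps with hC
    have h2 : C * C = S⁻¹ := psdSqrt_mul_self hps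
    have h3 : C⁻¹ * S⁻¹ * C⁻¹ = 1 := by
      rw [← h2, ← Matrix.mul_assoc C⁻¹ C C, Matrix.nonsing_inv_mul _ hdetC,
        Matrix.one_mul, Matrix.mul_nonsing_inv _ hdetC]
    rw [hiS, h3]
    exact lambdaMin_one hm
end

section
/- Let V, V_c : ℝ^m → ℝ be measurable functions with exp(−V) and exp(−V_c) integrable with respect to Lebesgue measure, and suppose there is M ≥ 0 with 0 ≤ V(x) − V_c(x) ≤ M for all x ∈ ℝ^m. Let μ and μ_c be the probability measures with Lebesgue densities proportional to exp(−V) and exp(−V_c) respectively. If μ_c satisfies a Poincaré inequality with constant λ_c > 0, i.e. ∫ |f − ∫ f dμ_c|² dμ_c ≤ λ_c⁻¹ ∫ ‖∇f‖² dμ_c for every differentiable f ∈ L²(μ_c), then μ satisfies a Poincaré inequality with constant exp(−M) λ_c: for every differentiable f belonging to L²(μ) and L²(μ_c) with ∫ ‖∇f‖² dμ_c < ∞, ∫ |f − ∫ f dμ|² dμ ≤ exp(M) λ_c⁻¹ ∫ ‖∇f‖² dμ. -/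
open MeasureTheory


lemma hs_var_min {α : Type*} [MeasurableSpace α] (μ : Measure α) [IsProbabilityMeasure μ]
    (f : α → ℝ) (hf : MemLp f 2 μ) (a : ℝ) :
    ∫ x, (f x - ∫ y, f y ∂μ) ^ 2 ∂μ ≤ ∫ x, (f x - a) ^ 2 ∂μ := by
  set m := ∫ y, f y ∂μ with hm
  have hint : Integrable f μ := hf.integrable (by norm_num)
  have h2 : Integrable (fun x => (f x - m) ^ 2) μ :=
    (hf.sub (memLp_const m)).integrable_sq
  have hlin : Integrable (fun x => 2 * (m - a) * (f x - m)) μ :=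
    ((hint.sub (integrable_const m)).const_mul _)
  have hconst : Integrable (fun _ : α => (m - a) ^ 2) μ := integrable_const _
  have hiden : ∀ x, (f x - a) ^ 2
      = (f x - m) ^ 2 + (2 * (m - a) * (f x - m) + (m - a) ^ 2) := by
    intro x; ring
  calc ∫ x, (f x - m) ^ 2 ∂μ
      ≤ ∫ x, (f x - m) ^ 2 ∂μ + (2 * (m - a) * (∫ x, (f x - m) ∂μ) + (m - a) ^ 2) := by
        have hz : ∫ x, (f x - m) ∂μ = 0 := by
          rw [integral_sub hint (integrable_const m), integral_const]
          simp [hm]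
        rw [hz]
        nlinarith [sq_nonneg (m - a)]
    _ = ∫ x, (f x - a) ^ 2 ∂μ := by
        rw [integral_sub hint (integrable_const m), integral_const]
        simp only [measure_univ, ENNReal.toReal_one, one_smul, probReal_univ]
        have : (fun x => (f x - a) ^ 2)
            = fun x => (f x - m) ^ 2 + (2 * (m - a) * (f x - m) + (m - a) ^ 2) := by
          funext x; exact hiden x
        have hsum : Integrable (fun x => 2 * (m - a) * (f x - m) + (m - a) ^ 2) μ :=
          hlin.add hconst
        rw [this, integral_add h2 hsum, integral_add hlin hconst, integral_const_mul,
          integral_sub hint (integrable_const m), integral_const, integral_const]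
        simp

/-- Holley–Stroock perturbation principle: if `μ ∝ exp(−V) dx` and `μ_c ∝ exp(−V_c) dx`
with `0 ≤ V − V_c ≤ M`, and `μ_c` satisfies a Poincaré inequality with constant `λ_c > 0`,
then `μ` satisfies a Poincaré inequality with constant `exp(−M) λ_c`. -/
theorem holley_stroock_poincare {m : ℕ}
    (V Vc : EuclideanSpace ℝ (Fin m) → ℝ)
    (hVmeas : Measurable V) (hVcmeas : Measurable Vc)
    (hVint : Integrable (fun x => Real.exp (-V x)) volume)
    (hVcint : Integrable (fun x => Real.exp (-Vc x)) volume)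
    (M : ℝ) (hM : 0 ≤ M)
    (hbound : ∀ x, 0 ≤ V x - Vc x ∧ V x - Vc x ≤ M)
    (μ μc : Measure (EuclideanSpace ℝ (Fin m)))
    (hμ : μ = volume.withDensity fun x =>
      ENNReal.ofReal (Real.exp (-V x) / ∫ y, Real.exp (-V y)))
    (hμc : μc = volume.withDensity fun x =>
      ENNReal.ofReal (Real.exp (-Vc x) / ∫ y, Real.exp (-Vc y)))
    (lamc : ℝ) (hlamc : 0 < lamc)
    (hPoincare : ∀ f : EuclideanSpace ℝ (Fin m) → ℝ, Differentiable ℝ f →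
      MemLp f 2 μc → Integrable (fun x => ‖gradient f x‖ ^ 2) μc →
      (∫ x, (f x - ∫ y, f y ∂μc) ^ 2 ∂μc) ≤ lamc⁻¹ * ∫ x, ‖gradient f x‖ ^ 2 ∂μc)
    (f : EuclideanSpace ℝ (Fin m) → ℝ) (hf : Differentiable ℝ f)
    (hfμ : MemLp f 2 μ) (hfμc : MemLp f 2 μc)
    (hgrad : Integrable (fun x => ‖gradient f x‖ ^ 2) μc) :
    (∫ x, (f x - ∫ y, f y ∂μ) ^ 2 ∂μ)
      ≤ Real.exp M * lamc⁻¹ * ∫ x, ‖gradient f x‖ ^ 2 ∂μ := by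
  set Z := ∫ y, Real.exp (-V y) with hZdef
  set Zc := ∫ y, Real.exp (-Vc y) with hZcdef
  have hZ : 0 < Z := integral_exp_pos hVint
  have hZc : 0 < Zc := integral_exp_pos hVcint
  -- probability measures
  have hprobμ : IsProbabilityMeasure μ := by
    constructor
    rw [hμ, withDensity_apply _ MeasurableSet.univ, setLIntegral_univ,
      ← ofReal_integral_eq_lintegral_ofReal (hVint.div_const Z)
        (Filter.Eventually.of_forall fun x => by positivity)]
    rw [integral_div]
    rw [div_self hZ.ne']
    simp
  have hprobμc : IsProbabilityMeasure μc := by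
    constructor
    rw [hμc, withDensity_apply _ MeasurableSet.univ, setLIntegral_univ,
      ← ofReal_integral_eq_lintegral_ofReal (hVcint.div_const Zc)
        (Filter.Eventually.of_forall fun x => by positivity)]
    rw [integral_div]
    rw [div_self hZc.ne']
    simp
  -- measure comparisons
  have hle1 : μ ≤ (ENNReal.ofReal (Zc / Z)) • μc := by
    rw [hμ, hμc, ← withDensity_smul' _ _ ENNReal.ofReal_ne_top]
    refine withDensity_mono (Filter.Eventually.of_forall fun x => ?_)
    simp only [Pi.smul_apply, smul_eq_mul]
    rw [← ENNReal.ofReal_mul (by positivity)]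
    apply ENNReal.ofReal_le_ofReal
    have hratio : Zc / Z * (Real.exp (-Vc x) / Zc) = Real.exp (-Vc x) / Z := by
      field_simp
    rw [hratio]
    gcongr
    linarith [(hbound x).1]
  have hle2 : μc ≤ (ENNReal.ofReal (Real.exp M * (Z / Zc))) • μ := by
    rw [hμ, hμc, ← withDensity_smul' _ _ ENNReal.ofReal_ne_top]
    refine withDensity_mono (Filter.Eventually.of_forall fun x => ?_)
    simp only [Pi.smul_apply, smul_eq_mul]
    rw [← ENNReal.ofReal_mul (by positivity)]
    apply ENNReal.ofReal_le_ofReal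
    have hratio : Real.exp M * (Z / Zc) * (Real.exp (-V x) / Z)
        = Real.exp M * Real.exp (-V x) / Zc := by
      field_simp
    rw [hratio, ← Real.exp_add]
    gcongr
    linarith [(hbound x).2]
  set mc := ∫ y, f y ∂μc with hmc
  have hsq_c : Integrable (fun x => (f x - mc) ^ 2) μc :=
    (hfμc.sub (memLp_const mc)).integrable_sq
  have hgradnn : (0 : EuclideanSpace ℝ (Fin m) → ℝ)
      ≤ᵐ[(ENNReal.ofReal (Real.exp M * (Z / Zc))) • μ] fun x => ‖gradient f x‖ ^ 2 :=
    Filter.Eventually.of_forall fun x => by positivity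
  -- integrability of gradient sq wrt μ
  have hgradμ : Integrable (fun x => ‖gradient f x‖ ^ 2) μ :=
    (hgrad.smul_measure ENNReal.ofReal_ne_top).mono_measure hle1
  -- step 1: variance minimization
  have step1 : ∫ x, (f x - ∫ y, f y ∂μ) ^ 2 ∂μ ≤ ∫ x, (f x - mc) ^ 2 ∂μ :=
    hs_var_min μ f hfμ mc
  -- step 2: measure comparison
  have step2 : ∫ x, (f x - mc) ^ 2 ∂μ ≤ (Zc / Z) * ∫ x, (f x - mc) ^ 2 ∂μc := by
    have h := integral_mono_measure hle1
      (Filter.Eventually.of_forall fun x => sq_nonneg _)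
      (hsq_c.smul_measure ENNReal.ofReal_ne_top)
    rwa [integral_smul_measure, ENNReal.toReal_ofReal (by positivity), smul_eq_mul] at h
  -- step 3: Poincaré
  have step3 : ∫ x, (f x - mc) ^ 2 ∂μc ≤ lamc⁻¹ * ∫ x, ‖gradient f x‖ ^ 2 ∂μc :=
    hPoincare f hf hfμc hgrad
  -- step 4: gradient measure comparison
  have step4 : ∫ x, ‖gradient f x‖ ^ 2 ∂μc
      ≤ Real.exp M * (Z / Zc) * ∫ x, ‖gradient f x‖ ^ 2 ∂μ := by
    have h := integral_mono_measure hle2 hgradnn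
      (hgradμ.smul_measure ENNReal.ofReal_ne_top)
    rwa [integral_smul_measure, ENNReal.toReal_ofReal (by positivity), smul_eq_mul] at h
  have hInn : 0 ≤ ∫ x, ‖gradient f x‖ ^ 2 ∂μ :=
    integral_nonneg fun x => by positivity
  calc ∫ x, (f x - ∫ y, f y ∂μ) ^ 2 ∂μ
      ≤ (Zc / Z) * ∫ x, (f x - mc) ^ 2 ∂μc := le_trans step1 step2
    _ ≤ (Zc / Z) * (lamc⁻¹ * ∫ x, ‖gradient f x‖ ^ 2 ∂μc) := by
        apply mul_le_mul_of_nonneg_left step3 (by positivity)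
    _ ≤ (Zc / Z) * (lamc⁻¹ * (Real.exp M * (Z / Zc) * ∫ x, ‖gradient f x‖ ^ 2 ∂μ)) := by
        apply mul_le_mul_of_nonneg_left _ (by positivity)
        apply mul_le_mul_of_nonneg_left step4 (by positivity)
    _ = Real.exp M * lamc⁻¹ * ∫ x, ‖gradient f x‖ ^ 2 ∂μ := by
        field_simp
end

section
/- Let n ∈ ℕ, let W be a real symmetric n×n matrix with nonnegative entries, let D be the diagonal matrix with D_{ii} = Σ_j W_{ij}, and let L := D − W be the graph Laplacian. Let U := {u ∈ ℝ^n : Σ_i u_i = 0}, let α ∈ ℕ with α ≥ 1, and let Λ₂ := min{⟨L u, u⟩ : u ∈ U, ‖u‖ = 1}. Let γ > 0, H(w) := ∫_{−∞}^{w} exp(−t²/(2γ²)) dt, 𝒵 ⊂ {1, …, n}, y_j ∈ {−1,1} for j ∈ 𝒵, and define the probit objective G(u) := (1/2)⟨L^α u, u⟩ − Σ_{j ∈ 𝒵} log H(y_j u_j) for u ∈ U. Then G is Λ₂^α-strongly convex on U: for all u₀, u₁ ∈ U and t ∈ [0,1], G((1−t)u₀ + t u₁) ≤ (1−t)G(u₀)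 + t G(u₁) − (Λ₂^α/2) t(1−t) ‖u₀ − u₁‖². -/
set_option maxHeartbeats 1000000

open Matrix

open MeasureTheory Real Set Filter


open MeasureTheory Real Set Filter

lemma gaussian_neg_log_cdf_convex (γ : ℝ) (hγ : 0 < γ) :
    ConvexOn ℝ Set.univ
      (fun w => -Real.log (∫ t in Set.Iio w, Real.exp (-t ^ 2 / (2 * γ ^ 2)))) := by
  set b : ℝ := (2 * γ ^ 2)⁻¹ with hbdef
  have hb : 0 < b := by positivity
  set f : ℝ → ℝ := fun t => Real.exp (-t ^ 2 / (2 * γ ^ 2)) with hfdef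
  have hfb : f = fun t => Real.exp (-b * t ^ 2) := by
    funext t; simp only [hfdef, hbdef]; ring_nf
  have hint : Integrable f := by rw [hfb]; exact integrable_exp_neg_mul_sq hb
  have hfpos : ∀ t, 0 < f t := fun t => Real.exp_pos _
  set Hf : ℝ → ℝ := fun w => ∫ t in Set.Iio w, f t with hHdef
  have hfcont : Continuous f := by
    rw [hfb]; exact Real.continuous_exp.comp (by continuity)
  have Hpos : ∀ w, 0 < Hf w := by
    intro w
    rw [hHdef]
    rw [setIntegral_pos_iff_support_of_nonneg_ae
      (Filter.Eventually.of_forall fun t => (hfpos t).le) hint.integrableOn]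
    have : Function.support f = Set.univ := by
      ext t; simp [Function.mem_support, (hfpos t).ne']
    rw [this, Set.univ_inter]
    simp [Real.volume_Iio]
  -- H has derivative f
  have hkey : ∀ w, Hf w = (∫ t in Set.Iic (0:ℝ), f t) + ∫ t in (0:ℝ)..w, f t := by
    intro w
    have := intervalIntegral.integral_Iic_sub_Iic (hint.integrableOn (s := Set.Iic (0:ℝ)))
      (hint.integrableOn (s := Set.Iic w))
    have h2 : Hf w = ∫ t in Set.Iic w, f t :=
      (integral_Iic_eq_integral_Iio' (measure_singleton w)).symm
    rw [h2]; linarith [this]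
  have HderivAt : ∀ w, HasDerivAt Hf (f w) w := by
    intro w
    have h1 : HasDerivAt (fun u => (∫ t in Set.Iic (0:ℝ), f t) + ∫ t in (0:ℝ)..u, f t)
        (f w) w := by
      refine HasDerivAt.const_add _ ?_
      exact intervalIntegral.integral_hasDerivAt_right hint.intervalIntegrable
        hint.aestronglyMeasurable.stronglyMeasurableAtFilter hfcont.continuousAt
    exact h1.congr_of_eventuallyEq (Filter.Eventually.of_forall hkey)
  -- f has derivative
  have hf' : ∀ w, HasDerivAt f (-(w / γ ^ 2) * f w) w := by
    intro w
    have hu : HasDerivAt (fun t : ℝ => -t ^ 2 / (2 * γ ^ 2)) (-(w / γ ^ 2)) w := by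
      have := ((hasDerivAt_pow 2 w).neg).div_const (2 * γ ^ 2)
      convert this using 1
      · rfl
      · rfl
      · rfl
      · field_simp; ring
    have := hu.exp
    simpa [hfdef, mul_comm] using this
  set g : ℝ → ℝ := fun w => -Real.log (Hf w) with hgdef
  set g' : ℝ → ℝ := fun w => -(f w / Hf w) with hg'def
  have hg' : ∀ w, HasDerivAt g (g' w) w :=
    fun w => (((HderivAt w).log (Hpos w).ne')).neg
  have hderiv_g : deriv g = g' := funext fun w => (hg' w).deriv
  have hg'' : ∀ w, HasDerivAt g'
      (-((-(w / γ ^ 2) * f w * Hf w - f w * f w) / (Hf w) ^ 2)) w := by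
    intro w
    exact (((hf' w).div (HderivAt w) (Hpos w).ne')).neg
  -- key inequality
  have hkeyineq : ∀ w, 0 ≤ f w + w / γ ^ 2 * Hf w := by
    intro w
    rcases le_or_gt 0 w with hw | hw
    · have : 0 ≤ w / γ ^ 2 * Hf w := mul_nonneg (by positivity) (Hpos w).le
      linarith [hfpos w]
    · -- w < 0
      have hmint : Integrable (fun t : ℝ => -(t / γ ^ 2) * f t) := by
        have h0 := (integrable_mul_exp_neg_mul_sq hb).const_mul (-(γ ^ 2)⁻¹)
        refine h0.congr (Filter.Eventually.of_forall fun t => ?_)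
        rw [hfb]; ring
      have htend : Tendsto f atBot (nhds 0) := by
        have t1 : Tendsto (fun t : ℝ => t ^ 2) atBot atTop := by
          have := (tendsto_pow_atTop (n := 2) (two_ne_zero)).comp (tendsto_abs_atBot_atTop : Tendsto (fun t : ℝ => |t|) atBot atTop)
          refine this.congr fun t => ?_
          simp [sq_abs]
        have t2 : Tendsto (fun t : ℝ => -t ^ 2) atBot atBot :=
          tendsto_neg_atTop_atBot.comp t1
        have t3 : Tendsto (fun t : ℝ => -t ^ 2 / (2 * γ ^ 2)) atBot atBot :=
          t2.atBot_div_const (by positivity)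
        exact Real.tendsto_exp_atBot.comp t3
      have hFTC : ∫ t in Set.Iic w, -(t / γ ^ 2) * f t = f w := by
        have := integral_Iic_of_hasDerivAt_of_tendsto' (a := w)
          (fun x _ => hf' x) hmint.integrableOn htend
        simpa using this
      have hIio : ∫ t in Set.Iio w, -(t / γ ^ 2) * f t = f w := by
        rw [← integral_Iic_eq_integral_Iio' (measure_singleton w)]; exact hFTC
      have hmono : -(w / γ ^ 2) * Hf w ≤ ∫ t in Set.Iio w, -(t / γ ^ 2) * f t := by
        have h1 : -(w / γ ^ 2) * Hf w = ∫ t in Set.Iio w, -(w / γ ^ 2) * f t := by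
          rw [hHdef]; exact (integral_const_mul _ _).symm
        rw [h1]
        refine setIntegral_mono_on ((hint.const_mul _).integrableOn)
          hmint.integrableOn measurableSet_Iio fun t ht => ?_
        have ht' : t < w := ht
        have : -(w / γ ^ 2) ≤ -(t / γ ^ 2) := by
          have : t / γ ^ 2 ≤ w / γ ^ 2 := by gcongr
          linarith
        exact mul_le_mul_of_nonneg_right this (hfpos t).le
      have : -(w / γ ^ 2) * Hf w ≤ f w := by rw [← hIio]; exact hmono
      linarith
  -- assemble convexity
  refine convexOn_of_deriv2_nonneg convex_univ ?_ ?_ ?_ ?_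
  · exact (Continuous.continuousOn (by
      exact continuous_iff_continuousAt.2 fun w => (hg' w).continuousAt))
  · intro w _; exact (hg' w).differentiableAt.differentiableWithinAt
  · intro w _
    rw [hderiv_g]
    exact (hg'' w).differentiableAt.differentiableWithinAt
  · intro w _
    have h2 : deriv^[2] g w = deriv (deriv g) w := by
      simp [Function.iterate_succ, Function.iterate_one]
    rw [h2, hderiv_g, (hg'' w).deriv]
    have hne := (Hpos w).ne'
    have heq : -((-(w / γ ^ 2) * f w * Hf w - f w * f w) / (Hf w) ^ 2)
        = f w * (f w + w / γ ^ 2 * Hf w) / (Hf w) ^ 2 := by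
      field_simp
      ring
    rw [heq]
    exact div_nonneg (mul_nonneg (hfpos w).le (hkeyineq w)) (sq_nonneg _)



lemma spectral_pow_bound (n α : ℕ) (hα : 1 ≤ α) (L : Matrix (Fin n) (Fin n) ℝ)
    (hherm : L.IsHermitian)
    (hpsd : ∀ x : Fin n → ℝ, 0 ≤ (L *ᵥ x) ⬝ᵥ x)
    (hker : L *ᵥ (fun _ => (1 : ℝ)) = 0)
    (Λ₂ : ℝ) (hΛnn : 0 ≤ Λ₂)
    (hray : ∀ v : Fin n → ℝ, (∑ i, v i) = 0 → Λ₂ * (∑ i, v i ^ 2) ≤ (L *ᵥ v) ⬝ᵥ v) :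
    ∀ d : Fin n → ℝ, (∑ i, d i) = 0 →
      Λ₂ ^ α * (∑ i, d i ^ 2) ≤ (L ^ α *ᵥ d) ⬝ᵥ d := by
  intro d hd0
  have hsymmL : Lᵀ = L := by
    have := hherm.eq; rwa [conjTranspose_eq_transpose_of_trivial] at this
  have hsymmLα : (L ^ α)ᵀ = L ^ α := by
    have := (hherm.pow α).eq
    rwa [conjTranspose_eq_transpose_of_trivial] at this
  have hflip : ∀ (A : Matrix (Fin n) (Fin n) ℝ), Aᵀ = A →
      ∀ x y : Fin n → ℝ, (A *ᵥ x) ⬝ᵥ y = x ⬝ᵥ (A *ᵥ y) := by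
    intro A hA x y
    rw [Matrix.dotProduct_mulVec, ← Matrix.mulVec_transpose, hA]
  have hdot : ∀ x y : EuclideanSpace ℝ (Fin n),
      (inner ℝ x y : ℝ) = (x : Fin n → ℝ) ⬝ᵥ (y : Fin n → ℝ) := by
    intro x y
    simp [PiLp.inner_apply, RCLike.inner_apply, dotProduct, mul_comm]
  set b := hherm.eigenvectorBasis with hbdef
  set lam := hherm.eigenvalues with hlamdef
  have hLb : ∀ i, L *ᵥ ⇑(b i) = lam i • ⇑(b i) := fun i =>
    hherm.mulVec_eigenvectorBasis i
  have hLpow : ∀ (k : ℕ) (i : Fin n), L ^ k *ᵥ ⇑(b i) = (lam i ^ k) • ⇑(b i) := by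
    intro k i
    induction k with
    | zero => simp
    | succ m ih =>
      rw [pow_succ', pow_succ']
      rw [← Matrix.mulVec_mulVec, ih, Matrix.mulVec_smul, hLb]
      rw [smul_smul, mul_comm]
  have hunit : ∀ i, (⇑(b i) : Fin n → ℝ) ⬝ᵥ ⇑(b i) = 1 := by
    intro i
    have h1 : (inner ℝ (b i) (b i) : ℝ) = 1 := by
      have := b.orthonormal.1 i
      rw [@inner_self_eq_norm_sq_to_K ℝ] at *
      simp [this]
    rw [← hdot]; exact h1
  have hsq : ∀ v : Fin n → ℝ, v ⬝ᵥ v = ∑ j, v j ^ 2 := by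
    intro v; simp [dotProduct, sq]
  have hsumv : ∀ v : Fin n → ℝ, v ⬝ᵥ (fun _ => (1:ℝ)) = ∑ j, v j := by
    intro v; simp [dotProduct]
  have hrepr : ∀ (x : EuclideanSpace ℝ (Fin n)) (i : Fin n),
      b.repr x i = (⇑(b i) : Fin n → ℝ) ⬝ᵥ x := by
    intro x i
    rw [b.repr_apply_apply, hdot]
  have hparseval : ∀ x y : EuclideanSpace ℝ (Fin n),
      (x : Fin n → ℝ) ⬝ᵥ (y : Fin n → ℝ) = ∑ i, b.repr x i * b.repr y i := by
    intro x y
    rw [← hdot]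
    rw [← LinearIsometryEquiv.inner_map_map b.repr x y, hdot]
    rfl
  have hcoeff : ∀ i, b.repr (WithLp.toLp 2 (L ^ α *ᵥ d)) i
      = lam i ^ α * b.repr (WithLp.toLp 2 d) i := by
    intro i
    rw [hrepr]
    rw [← hflip _ hsymmLα, hLpow α i, smul_dotProduct, smul_eq_mul, hrepr]
  have hsum1 : (L ^ α *ᵥ d) ⬝ᵥ d = ∑ i, lam i ^ α * (b.repr (WithLp.toLp 2 d) i) ^ 2 := by
    have := hparseval (WithLp.toLp 2 (L ^ α *ᵥ d)) (WithLp.toLp 2 d)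
    rw [this]
    refine Finset.sum_congr rfl fun i _ => ?_
    rw [hcoeff]; ring
  have hsum2 : (∑ i, d i ^ 2) = ∑ i, (b.repr (WithLp.toLp 2 d) i) ^ 2 := by
    have h1 : (d : Fin n → ℝ) ⬝ᵥ d = ∑ i, b.repr (WithLp.toLp 2 d) i * b.repr (WithLp.toLp 2 d) i := hparseval (WithLp.toLp 2 d) (WithLp.toLp 2 d)
    rw [hsq] at h1
    rw [h1]
    simp [sq]
  have hlamnn : ∀ i, 0 ≤ lam i := by
    intro i
    have h1 : (L *ᵥ ⇑(b i)) ⬝ᵥ ⇑(b i) = lam i := by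
      rw [hLb, smul_dotProduct, hunit, smul_eq_mul, mul_one]
    have := hpsd ⇑(b i)
    rw [h1] at this; exact this
  have hlam_ge : ∀ i, lam i ≠ 0 → Λ₂ ≤ lam i := by
    intro i hi
    obtain ⟨v, hv⟩ : ∃ v : Fin n → ℝ, v = ⇑(b i) := ⟨_, rfl⟩
    have hLv : L *ᵥ v = lam i • v := by rw [hv]; exact hLb i
    have hvv : v ⬝ᵥ v = 1 := by rw [hv]; exact hunit i
    have hperp : (∑ j, v j) = 0 := by
      have h2 : (L *ᵥ v) ⬝ᵥ (fun _ => (1:ℝ)) = 0 := by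
        rw [hflip _ hsymmL, hker, dotProduct_zero]
      rw [hLv, smul_dotProduct, smul_eq_mul] at h2
      rcases mul_eq_zero.1 h2 with h | h
      · exact absurd h hi
      · rw [← hsumv]; exact h
    have h4 := hray v hperp
    have h5 : (∑ j, v j ^ 2) = 1 := by rw [← hsq]; exact hvv
    rw [h5, mul_one] at h4
    have h6 : (L *ᵥ v) ⬝ᵥ v = lam i := by
      rw [hLv, smul_dotProduct, hvv, smul_eq_mul, mul_one]
    rwa [h6] at h4
  have hzero_coeff : Λ₂ ≠ 0 → ∀ i, lam i = 0 → b.repr (WithLp.toLp 2 d) i = 0 := by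
    intro hΛne i hi
    have hn : (0:ℝ) < n := by exact_mod_cast Fin.pos i
    obtain ⟨v, hv⟩ : ∃ v : Fin n → ℝ, v = ⇑(b i) := ⟨_, rfl⟩
    have hLv : L *ᵥ v = 0 := by rw [hv, hLb, hi, zero_smul]
    set a : ℝ := (∑ j, v j) / n with hadef
    set w : Fin n → ℝ := fun j => v j - a with hwdef
    have hw0 : (∑ j, w j) = 0 := by
      simp only [hwdef, Finset.sum_sub_distrib, Finset.sum_const, Finset.card_univ,
        Fintype.card_fin, nsmul_eq_mul, hadef]
      field_simp
      ring
    have hLw : L *ᵥ w = 0 := by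
      have hw' : w = v - a • (fun _ => (1:ℝ)) := by funext j; simp [hwdef]
      rw [hw', Matrix.mulVec_sub, hLv, Matrix.mulVec_smul, hker]
      simp
    have hray' := hray w hw0
    rw [hLw, zero_dotProduct] at hray'
    have hΛpos : 0 < Λ₂ := lt_of_le_of_ne hΛnn (Ne.symm hΛne)
    have hsumw : (∑ j, w j ^ 2) ≤ 0 := by nlinarith
    have hsumw' : (∑ j, w j ^ 2) = 0 :=
      le_antisymm hsumw (Finset.sum_nonneg fun j _ => sq_nonneg _)
    have hweq : ∀ j, w j = 0 := by
      intro j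
      have h7 := (Finset.sum_eq_zero_iff_of_nonneg
        (fun j _ => sq_nonneg (w j))).1 hsumw' j (Finset.mem_univ j)
      exact pow_eq_zero_iff (by norm_num : 2 ≠ 0) |>.1 h7
    have hveq : ∀ j, v j = a := by
      intro j; have := hweq j; simp [hwdef] at this; linarith
    have h8 : b.repr (WithLp.toLp 2 d) i = a * (∑ j, d j) := by
      rw [hrepr, ← hv]
      simp only [dotProduct]
      rw [Finset.mul_sum]
      exact Finset.sum_congr rfl fun j _ => by rw [hveq j]
    rw [h8, hd0, mul_zero]
  rw [hsum1, hsum2, Finset.mul_sum]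
  refine Finset.sum_le_sum fun i _ => ?_
  rcases eq_or_ne (lam i) 0 with hi | hi
  · rcases eq_or_ne Λ₂ 0 with hΛ | hΛ
    · rw [hΛ, hi, zero_pow (by omega : α ≠ 0)]
    · rw [hzero_coeff hΛ i hi]
      simp
  · have h9 := hlam_ge i hi
    have h1 : Λ₂ ^ α ≤ lam i ^ α := pow_le_pow_left₀ hΛnn h9 α
    exact mul_le_mul_of_nonneg_right h1 (sq_nonneg _)

/-- The probit objective `G(u) = ½⟨L^α u, u⟩ − Σ_{j ∈ 𝒵} log H(y_j u_j)` on the mean-zero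
subspace `U` is `Λ₂^α`-strongly convex, where `Λ₂` is the smallest nontrivial eigenvalue of
the graph Laplacian `L`. -/
theorem probit_objective_strongly_convex (n : ℕ) (hn : 2 ≤ n)
    (W : Matrix (Fin n) (Fin n) ℝ) (hWsymm : W.IsSymm) (hWnonneg : ∀ i j, 0 ≤ W i j)
    (L : Matrix (Fin n) (Fin n) ℝ)
    (hL : L = Matrix.diagonal (fun i => ∑ j, W i j) - W)
    (α : ℕ) (hα : 1 ≤ α)
    (Λ₂ : ℝ)
    (hΛ₂ : Λ₂ = sInf {r : ℝ | ∃ u : Fin n → ℝ,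
      (∑ i, u i) = 0 ∧ (∑ i, u i ^ 2) = 1 ∧ r = (L *ᵥ u) ⬝ᵥ u})
    (γ : ℝ) (hγ : 0 < γ)
    (H : ℝ → ℝ) (hH : H = fun w => ∫ t in Set.Iio w, Real.exp (-t ^ 2 / (2 * γ ^ 2)))
    (Z : Finset (Fin n)) (y : Fin n → ℝ) (hy : ∀ j ∈ Z, y j = -1 ∨ y j = 1)
    (G : (Fin n → ℝ) → ℝ)
    (hG : G = fun u => (1 / 2) * ((L ^ α *ᵥ u) ⬝ᵥ u)
      - ∑ j ∈ Z, Real.log (H (y j * u j))) :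
    ∀ u₀ u₁ : Fin n → ℝ, (∑ i, u₀ i) = 0 → (∑ i, u₁ i) = 0 →
      ∀ t ∈ Set.Icc (0 : ℝ) 1,
        G ((1 - t) • u₀ + t • u₁)
          ≤ (1 - t) * G u₀ + t * G u₁
            - Λ₂ ^ α / 2 * (t * (1 - t)) * ∑ i, (u₀ i - u₁ i) ^ 2 := by
  -- L is symmetric / Hermitian
  have hherm : L.IsHermitian := by
    rw [Matrix.IsHermitian, conjTranspose_eq_transpose_of_trivial, hL,
      Matrix.transpose_sub, Matrix.diagonal_transpose, hWsymm]
  -- L is positive semidefinite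
  have hpsd : ∀ x : Fin n → ℝ, 0 ≤ (L *ᵥ x) ⬝ᵥ x := by
    intro x
    have e1 : ∀ i j : Fin n, W i j * (x i - x j) ^ 2
        = W i j * x i ^ 2 - 2 * (W i j * x j * x i) + W i j * x j ^ 2 := fun i j => by ring
    have hswap : (∑ i, ∑ j, W i j * x j ^ 2) = ∑ i, ∑ j, W i j * x i ^ 2 := by
      rw [Finset.sum_comm]
      exact Finset.sum_congr rfl fun j _ => Finset.sum_congr rfl fun i _ => by
        rw [hWsymm.apply i j]
    have hquad : (L *ᵥ x) ⬝ᵥ x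
        = (∑ i, ∑ j, W i j * x i ^ 2) - (∑ i, ∑ j, W i j * x j * x i) := by
      rw [hL, Matrix.sub_mulVec, sub_dotProduct]
      congr 1
      · simp only [dotProduct, Matrix.mulVec_diagonal]
        simp_rw [Finset.sum_mul, pow_two, mul_assoc]
      · simp only [dotProduct, Matrix.mulVec]
        simp_rw [Finset.sum_mul]
    have htotal : (∑ i, ∑ j, W i j * (x i - x j) ^ 2)
        = (∑ i, ∑ j, W i j * x i ^ 2) - 2 * (∑ i, ∑ j, W i j * x j * x i)
          + (∑ i, ∑ j, W i j * x j ^ 2) := by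
      simp_rw [e1, Finset.sum_add_distrib, Finset.sum_sub_distrib, ← Finset.mul_sum]
    have hpos : 0 ≤ ∑ i, ∑ j, W i j * (x i - x j) ^ 2 :=
      Finset.sum_nonneg fun i _ => Finset.sum_nonneg fun j _ =>
        mul_nonneg (hWnonneg i j) (sq_nonneg _)
    linarith
  -- kernel contains constants
  have hker : L *ᵥ (fun _ => (1 : ℝ)) = 0 := by
    funext i
    rw [hL, Matrix.sub_mulVec]
    simp [Matrix.mulVec_diagonal, Matrix.mulVec, dotProduct,
      Matrix.diagonal_apply, Finset.sum_ite_eq]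
  -- the constraint set is nonempty
  set S : Set ℝ := {r : ℝ | ∃ u : Fin n → ℝ,
      (∑ i, u i) = 0 ∧ (∑ i, u i ^ 2) = 1 ∧ r = (L *ᵥ u) ⬝ᵥ u} with hSdef
  have hSne : S.Nonempty := by
    set i0 : Fin n := ⟨0, by omega⟩
    set i1 : Fin n := ⟨1, by omega⟩
    have hne : i0 ≠ i1 := by simp [i0, i1, Fin.ext_iff]
    set s : ℝ := Real.sqrt (1 / 2) with hsdef
    have hs2 : s ^ 2 = 1 / 2 := Real.sq_sqrt (by norm_num)
    set u : Fin n → ℝ := fun i =>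
      (if i = i0 then s else 0) + (if i = i1 then -s else 0) with hudef
    have hu1 : (∑ i, u i) = 0 := by
      simp [hudef, Finset.sum_add_distrib, Finset.sum_ite_eq']
    have hu2 : (∑ i, u i ^ 2) = 1 := by
      have e : ∀ i, u i ^ 2 = (if i = i0 then s ^ 2 else 0) + (if i = i1 then s ^ 2 else 0) := by
        intro i
        by_cases h0 : i = i0
        · have h1 : i ≠ i1 := by rw [h0]; exact hne
          simp [hudef, h0, h1, hne]
        · by_cases h1 : i = i1
          · simp [hudef, h0, h1, neg_sq, hne.symm]
          · simp [hudef, h0, h1]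
      simp [e, Finset.sum_add_distrib, Finset.sum_ite_eq', hs2]
      norm_num
    exact ⟨_, u, hu1, hu2, rfl⟩
  have hSlb : ∀ r ∈ S, (0:ℝ) ≤ r := by
    rintro r ⟨u, -, -, rfl⟩; exact hpsd u
  have hbdd : BddBelow S := ⟨0, fun r hr => hSlb r hr⟩
  have hΛnn : 0 ≤ Λ₂ := by rw [hΛ₂]; exact le_csInf hSne hSlb
  -- Rayleigh quotient bound
  have hray : ∀ v : Fin n → ℝ, (∑ i, v i) = 0 →
      Λ₂ * (∑ i, v i ^ 2) ≤ (L *ᵥ v) ⬝ᵥ v := by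
    intro v hv
    rcases eq_or_ne (∑ i, v i ^ 2) 0 with hm | hm
    · have hv0 : v = 0 := by
        funext i
        have := (Finset.sum_eq_zero_iff_of_nonneg
          (fun j _ => sq_nonneg (v j))).1 hm i (Finset.mem_univ i)
        exact pow_eq_zero_iff (by norm_num : 2 ≠ 0) |>.1 this
      rw [hm, hv0]
      simp
    · have hmpos : 0 < ∑ i, v i ^ 2 :=
        lt_of_le_of_ne (Finset.sum_nonneg fun j _ => sq_nonneg _) (Ne.symm hm)
      set m : ℝ := ∑ i, v i ^ 2 with hmdef
      set s : ℝ := Real.sqrt m with hsdef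
      have hspos : 0 < s := Real.sqrt_pos.2 hmpos
      have hs2 : s ^ 2 = m := Real.sq_sqrt hmpos.le
      set u : Fin n → ℝ := fun i => v i / s with hudef
      have h1 : (∑ i, u i) = 0 := by
        simp only [hudef]
        rw [← Finset.sum_div, hv, zero_div]
      have h2 : (∑ i, u i ^ 2) = 1 := by
        simp only [hudef, div_pow]
        rw [← Finset.sum_div, hs2, ← hmdef, div_self hm]
      have h3 : (L *ᵥ u) ⬝ᵥ u = ((L *ᵥ v) ⬝ᵥ v) / m := by
        have hu' : u = s⁻¹ • v := by
          funext i; simp [hudef, div_eq_inv_mul]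
        rw [hu', Matrix.mulVec_smul, smul_dotProduct, dotProduct_smul,
          smul_eq_mul, smul_eq_mul, ← hs2, sq, div_eq_mul_inv, mul_inv]
        ring
      have h4 : Λ₂ ≤ ((L *ᵥ v) ⬝ᵥ v) / m := by
        rw [hΛ₂]
        exact csInf_le hbdd ⟨u, h1, h2, h3.symm⟩
      calc Λ₂ * m ≤ (((L *ᵥ v) ⬝ᵥ v) / m) * m := mul_le_mul_of_nonneg_right h4 hmpos.le
        _ = (L *ᵥ v) ⬝ᵥ v := by field_simp
  -- the spectral bound
  have hspec := spectral_pow_bound n α hα L hherm hpsd hker Λ₂ hΛnn hray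
  -- convexity of the log-likelihood term
  have hconv : ConvexOn ℝ Set.univ (fun w => -Real.log (H w)) := by
    rw [hH]; exact gaussian_neg_log_cdf_convex γ hγ
  -- main argument
  intro u₀ u₁ h0 h1 t ht
  obtain ⟨ht0, ht1⟩ := ht
  have htt : 0 ≤ t * (1 - t) := mul_nonneg ht0 (by linarith)
  set v : Fin n → ℝ := (1 - t) • u₀ + t • u₁ with hvdef
  set A : Matrix (Fin n) (Fin n) ℝ := L ^ α with hAdef
  -- quadratic identity
  have hQid : (A *ᵥ v) ⬝ᵥ v
      = (1 - t) * ((A *ᵥ u₀) ⬝ᵥ u₀) + t * ((A *ᵥ u₁) ⬝ᵥ u₁)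
        - (t * (1 - t)) * ((A *ᵥ (u₀ - u₁)) ⬝ᵥ (u₀ - u₁)) := by
    simp only [hvdef, Matrix.mulVec_add, Matrix.mulVec_smul, add_dotProduct,
      smul_dotProduct, dotProduct_add, dotProduct_smul,
      Matrix.mulVec_sub, sub_dotProduct, dotProduct_sub, smul_eq_mul]
    ring
  -- spectral bound for the difference
  have hd0 : (∑ i, (u₀ - u₁) i) = 0 := by
    simp only [Pi.sub_apply, Finset.sum_sub_distrib, h0, h1, sub_zero]
  have hdspec : Λ₂ ^ α * (∑ i, (u₀ i - u₁ i) ^ 2) ≤ (A *ᵥ (u₀ - u₁)) ⬝ᵥ (u₀ - u₁) := by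
    have := hspec (u₀ - u₁) hd0
    simpa using this
  -- convexity of each log term
  have hlog : ∀ j ∈ Z, -Real.log (H (y j * v j))
      ≤ (1 - t) * (-Real.log (H (y j * u₀ j))) + t * (-Real.log (H (y j * u₁ j))) := by
    intro j _
    have harg : y j * v j = (1 - t) * (y j * u₀ j) + t * (y j * u₁ j) := by
      simp only [hvdef, Pi.add_apply, Pi.smul_apply, smul_eq_mul]
      ring
    have := hconv.2 (Set.mem_univ (y j * u₀ j)) (Set.mem_univ (y j * u₁ j))
      (by linarith : (0:ℝ) ≤ 1 - t) ht0 (by ring)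
    simpa [harg, smul_eq_mul] using this
  have hlogsum : (∑ j ∈ Z, -Real.log (H (y j * v j)))
      ≤ (1 - t) * (∑ j ∈ Z, -Real.log (H (y j * u₀ j)))
        + t * (∑ j ∈ Z, -Real.log (H (y j * u₁ j))) := by
    rw [Finset.mul_sum, Finset.mul_sum, ← Finset.sum_add_distrib]
    exact Finset.sum_le_sum hlog
  rw [hG]
  simp only []
  have hsn : ∀ u : Fin n → ℝ, (∑ j ∈ Z, -Real.log (H (y j * u j)))
      = -(∑ j ∈ Z, Real.log (H (y j * u j))) := fun u => by
    rw [Finset.sum_neg_distrib]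
  rw [hsn v, hsn u₀, hsn u₁] at hlogsum
  have h2 : Λ₂ ^ α * (∑ i, (u₀ i - u₁ i) ^ 2) * (t * (1 - t))
      ≤ ((A *ᵥ (u₀ - u₁)) ⬝ᵥ (u₀ - u₁)) * (t * (1 - t)) :=
    mul_le_mul_of_nonneg_right hdspec htt
  have hQid' : ((L ^ α *ᵥ v) ⬝ᵥ v) = (A *ᵥ v) ⬝ᵥ v := rfl
  linarith [hQid, h2, hlogsum]
end
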